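/- In the UL-flexibility polytope, constraints u_k and l_{T−k+i} cannot be simultaneously and non-redundantly active: if a non-increasing p ∈ F(u,l) satisfies Δt·∑_{j=1}^k p_j = u_k and Δt·∑_{j=k−i+1}^T p_j = l_{T−k+i} for some 1 ≤ i ≤ k, then u_k − u_{k−i} = l_{T−k+i} − l_{T−k}, Δt·∑_{j=1}^{k−i} p_j = u_{k−i}, and Δt·∑_{j=k+1}^T p_j = l_{T−k}. -/

import Mathlib

open Finset

noncomputable section

/-- The UL-flexibility set: all signals `p` such that for every nonempty
subset `S` of time indices with `|S| = k`, `l k ≤ Δt * ∑_{t∈S} p t ≤ u k`. -/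
def ULset (T : ℕ) (Δt : ℝ) (u l : ℕ → ℝ) : Set (Fin T → ℝ) :=
  {p | ∀ S : Finset (Fin T), S.Nonempty →
    l S.card ≤ Δt * ∑ t ∈ S, p t ∧ Δt * ∑ t ∈ S, p t ≤ u S.card}

/-- Zero extension of a parameter vector: value 0 at index 0. -/
def ZExt (v : ℕ → ℝ) : ℕ → ℝ := fun k => if k = 0 then 0 else v k

/-- Valid UL parameters: the zero-extension of `u` is concave, nonnegative and
increasing; the zero-extension of `l` is convex, nonnegative and increasing; and
the zero-extension of `u` plus the reversed zero-extension of `l` is increasing. -/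
def ValidUL (T : ℕ) (u l : ℕ → ℝ) : Prop :=
  (∀ j, 1 ≤ j → j + 1 ≤ T → ZExt u (j - 1) + ZExt u (j + 1) ≤ 2 * ZExt u j) ∧
  (∀ k, k ≤ T → 0 ≤ ZExt u k) ∧
  (∀ j, j + 1 ≤ T → ZExt u j ≤ ZExt u (j + 1)) ∧
  (∀ j, 1 ≤ j → j + 1 ≤ T → 2 * ZExt l j ≤ ZExt l (j - 1) + ZExt l (j + 1)) ∧
  (∀ k, k ≤ T → 0 ≤ ZExt l k) ∧
  (∀ j, j + 1 ≤ T → ZExt l j ≤ ZExt l (j + 1)) ∧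
  (∀ j, 1 ≤ j → j ≤ T →
    ZExt l (T - j + 1) - ZExt l (T - j) ≤ ZExt u j - ZExt u (j - 1))

/-- Vertex candidate `p^(k)` (0-based time index `t` corresponds to paper index `t+1`). -/
def ULvertex (T : ℕ) (Δt : ℝ) (u l : ℕ → ℝ) (k : ℕ) : Fin T → ℝ :=
  fun t => if (t : ℕ) < k then (ZExt u ((t : ℕ) + 1) - ZExt u (t : ℕ)) / Δt
           else (ZExt l (T - (t : ℕ)) - ZExt l (T - (t : ℕ) - 1)) / Δt


lemma card_filter_lt_eq (T m : ℕ) (hm : m ≤ T) :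
    (Finset.univ.filter (fun j : Fin T => (j : ℕ) < m)).card = m := by
  have h : Finset.univ.filter (fun j : Fin T => (j : ℕ) < m)
      = (Finset.univ : Finset (Fin m)).map (Fin.castLEEmb hm) := by
    ext j
    simp only [mem_filter, mem_univ, true_and, mem_map, Fin.castLEEmb_apply]
    constructor
    · intro h; exact ⟨⟨(j : ℕ), h⟩, by ext; simp [Fin.castLE]⟩
    · rintro ⟨a, rfl⟩; exact a.2
  simp [h]

lemma card_filter_le_eq (T m : ℕ) (hm : m ≤ T) :
    (Finset.univ.filter (fun j : Fin T => m ≤ (j : ℕ))).card = T - m := by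
  have h2 : Finset.univ.filter (fun j : Fin T => m ≤ (j : ℕ))
      = Finset.univ.filter (fun j : Fin T => ¬ (j : ℕ) < m) := by
    ext j; simp [not_lt]
  have h3 := Finset.card_filter_add_card_filter_not
    (s := (Finset.univ : Finset (Fin T))) (p := fun j : Fin T => (j : ℕ) < m)
  have h1 := card_filter_lt_eq T m hm
  have h4 : (Finset.univ : Finset (Fin T)).card = T := by simp
  rw [h2]; omega

lemma tel_ineq (T : ℕ) (u l : ℕ → ℝ)
    (h7 : ∀ j, 1 ≤ j → j ≤ T →
      ZExt l (T - j + 1) - ZExt l (T - j) ≤ ZExt u j - ZExt u (j - 1)) :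
    ∀ i k, i ≤ k → k ≤ T →
      ZExt l (T - k + i) - ZExt l (T - k) ≤ ZExt u k - ZExt u (k - i) := by
  intro i
  induction i with
  | zero => intro k _ _; simp
  | succ i ih =>
    intro k hik hkT
    have h := ih k (by omega) hkT
    have h' := h7 (k - i) (by omega) (by omega)
    have e1 : T - (k - i) + 1 = T - k + (i + 1) := by omega
    have e2 : T - (k - i) = T - k + i := by omega
    have e3 : k - i - 1 = k - (i + 1) := by omega
    rw [e1, e2, e3] at h'
    linarith

/-- If a non-increasing `p ∈ F(u,l)` has constraints `u k`
(prefix of length `k`) and `l (T-k+i)` (suffix of length `T-k+i`, i.e. paper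
indices `k-i+1,…,T`) simultaneously active for some `1 ≤ i ≤ k`, then
`u k - u (k-i) = l (T-k+i) - l (T-k)`, the prefix of length `k-i` is exactly
`u (k-i)`, and the suffix of length `T-k` is exactly `l (T-k)`. -/
theorem simultaneous_active_constraints (T : ℕ) (hT : 1 ≤ T) (Δt : ℝ) (hΔt : 0 < Δt)
    (u l : ℕ → ℝ) (hvalid : ValidUL T u l)
    (p : Fin T → ℝ) (hmono : Antitone p) (hp : p ∈ ULset T Δt u l)
    (k i : ℕ) (hi1 : 1 ≤ i) (hik : i ≤ k) (hkT : k ≤ T)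
    (hu : Δt * ∑ j ∈ Finset.univ.filter (fun j : Fin T => (j : ℕ) < k), p j = u k)
    (hl : Δt * ∑ j ∈ Finset.univ.filter (fun j : Fin T => k - i ≤ (j : ℕ)), p j
            = l (T - k + i)) :
    ZExt u k - ZExt u (k - i) = ZExt l (T - k + i) - ZExt l (T - k) ∧
    Δt * ∑ j ∈ Finset.univ.filter (fun j : Fin T => (j : ℕ) < k - i), p j = ZExt u (k - i) ∧
    Δt * ∑ j ∈ Finset.univ.filter (fun j : Fin T => k ≤ (j : ℕ)), p j = ZExt l (T - k) := by
  obtain ⟨h1, h2, h3, h4, h5, h6, h7⟩ := hvalid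
  set A := Finset.univ.filter (fun j : Fin T => (j : ℕ) < k - i) with hA_def
  set B := Finset.univ.filter (fun j : Fin T => k - i ≤ (j : ℕ) ∧ (j : ℕ) < k) with hB_def
  set C := Finset.univ.filter (fun j : Fin T => k ≤ (j : ℕ)) with hC_def
  have hsplit1 : ∑ j ∈ Finset.univ.filter (fun j : Fin T => (j : ℕ) < k), p j
      = ∑ j ∈ A, p j + ∑ j ∈ B, p j := by
    rw [← Finset.sum_filter_add_sum_filter_not
      (Finset.univ.filter (fun j : Fin T => (j : ℕ) < k)) (fun j => (j : ℕ) < k - i)]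
    congr 1
    · apply Finset.sum_congr _ (fun _ _ => rfl)
      ext x; simp [hA_def]; omega
    · apply Finset.sum_congr _ (fun _ _ => rfl)
      ext x; simp [hB_def]; omega
  have hsplit2 : ∑ j ∈ Finset.univ.filter (fun j : Fin T => k - i ≤ (j : ℕ)), p j
      = ∑ j ∈ B, p j + ∑ j ∈ C, p j := by
    rw [← Finset.sum_filter_add_sum_filter_not
      (Finset.univ.filter (fun j : Fin T => k - i ≤ (j : ℕ))) (fun j => (j : ℕ) < k)]
    congr 1
    · apply Finset.sum_congr _ (fun _ _ => rfl)
      ext x; simp [hB_def]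
    · apply Finset.sum_congr _ (fun _ _ => rfl)
      ext x; simp [hC_def]; omega
  have hk0 : k ≠ 0 := by omega
  have hTki : T - k + i ≠ 0 := by omega
  have e1 : Δt * ∑ j ∈ A, p j + Δt * ∑ j ∈ B, p j = ZExt u k := by
    rw [← mul_add, ← hsplit1, hu]; simp [ZExt, hk0]
  have e2 : Δt * ∑ j ∈ B, p j + Δt * ∑ j ∈ C, p j = ZExt l (T - k + i) := by
    rw [← mul_add, ← hsplit2, hl]; simp [ZExt, hTki]; intro _ _; omega
  have hAle : Δt * ∑ j ∈ A, p j ≤ ZExt u (k - i) := by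
    rcases Nat.eq_zero_or_pos (k - i) with h0 | h0
    · have hAe : A = ∅ := by ext x; simp [hA_def, h0]
      simp [hAe, ZExt, h0]
    · have hne : A.Nonempty := ⟨⟨0, by omega⟩, by simp [hA_def]; omega⟩
      have hb := (hp A hne).2
      have hc : A.card = k - i := card_filter_lt_eq T (k - i) (by omega)
      rw [hc] at hb
      have : ZExt u (k - i) = u (k - i) := by simp [ZExt]; omega
      rw [this]; exact hb
  have hCge : ZExt l (T - k) ≤ Δt * ∑ j ∈ C, p j := by
    rcases Nat.lt_or_ge k T with h0 | h0
    · have hne : C.Nonempty := ⟨⟨k, h0⟩, by simp [hC_def]⟩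
      have hb := (hp C hne).1
      have hc : C.card = T - k := card_filter_le_eq T k hkT
      rw [hc] at hb
      have : ZExt l (T - k) = l (T - k) := by simp [ZExt]; omega
      rw [this]; exact hb
    · have hkT' : k = T := by omega
      have hCe : C = ∅ := by ext x; simp [hC_def]; omega
      have : T - k = 0 := by omega
      simp [hCe, this, ZExt]
  have htel : ZExt l (T - k + i) - ZExt l (T - k) ≤ ZExt u k - ZExt u (k - i) :=
    tel_ineq T u l h7 i k hik hkT
  refine ⟨by linarith, by linarith, by linarith⟩
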